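/- Let Q be the 4×4 doubly stochastic matrix with rows (0,0,0,1), (0,1/2,1/2,0), (1,0,0,0), (0,1/2,1/2,0). Then ‖Q − W‖ = 1, where W is the 4×4 matrix with all entries 1/4 and ‖·‖ is the operator norm induced by the Euclidean norm on ℝ⁴. -/

import Mathlib

open Matrix

/-- The 4×4 matrix all of whose entries equal 1/4. -/
noncomputable def Wmat : Matrix (Fin 4) (Fin 4) ℝ := fun _ _ => 1/4

/-- The operator norm (induced by the Euclidean norm on ℝ⁴) of a 4×4 real matrix. -/
noncomputable def euclOpNorm (A : Matrix (Fin 4) (Fin 4) ℝ) : ℝ :=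
  ‖(Matrix.toEuclideanLin A : EuclideanSpace ℝ (Fin 4) →ₗ[ℝ]
      EuclideanSpace ℝ (Fin 4)).toContinuousLinearMap‖

/-- The explicit doubly stochastic matrix from the paper. -/
noncomputable def Qex : Matrix (Fin 4) (Fin 4) ℝ :=
  !![0, 0, 0, 1;
     0, 1/2, 1/2, 0;
     1, 0, 0, 0;
     0, 1/2, 1/2, 0]

theorem opNorm_Qex_sub_W_eq_one : euclOpNorm (Qex - Wmat) = 1 := by
  set f := ((Matrix.toEuclideanLin (Qex - Wmat) : EuclideanSpace ℝ (Fin 4) →ₗ[ℝ]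
      EuclideanSpace ℝ (Fin 4)).toContinuousLinearMap) with hf
  have happ : ∀ v : EuclideanSpace ℝ (Fin 4), ∀ i,
      f v i = ((Qex - Wmat) *ᵥ (WithLp.equiv 2 (Fin 4 → ℝ) v)) i := fun v i => rfl
  have key : ∀ v : EuclideanSpace ℝ (Fin 4), ‖f v‖ ≤ ‖v‖ := by
    intro v
    rw [EuclideanSpace.norm_eq, EuclideanSpace.norm_eq]
    apply Real.sqrt_le_sqrt
    have h0 := happ v 0
    have h1 := happ v 1
    have h2 := happ v 2
    have h3 := happ v 3
    simp [Qex, Wmat, Matrix.sub_apply, Matrix.mulVec, dotProduct,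
      Fin.sum_univ_four] at h0 h1 h2 h3
    rw [Fin.sum_univ_four, Fin.sum_univ_four, h0, h1, h2, h3]
    simp only [Real.norm_eq_abs, sq_abs]
    set a := (WithLp.equiv 2 (Fin 4 → ℝ)) v 0
    set b := (WithLp.equiv 2 (Fin 4 → ℝ)) v 1
    set c := (WithLp.equiv 2 (Fin 4 → ℝ)) v 2
    set d := (WithLp.equiv 2 (Fin 4 → ℝ)) v 3
    have hva : v 0 = a := rfl
    have hvb : v 1 = b := rfl
    have hvc : v 2 = c := rfl
    have hvd : v 3 = d := rfl
    rw [hva, hvb, hvc, hvd]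
    nlinarith [sq_nonneg (b - c), sq_nonneg (a + b + c + d)]
  have upper : ‖f‖ ≤ 1 := by
    apply ContinuousLinearMap.opNorm_le_bound _ zero_le_one
    intro v; rw [one_mul]; exact key v
  have lower : (1 : ℝ) ≤ ‖f‖ := by
    set v : EuclideanSpace ℝ (Fin 4) := (WithLp.equiv 2 (Fin 4 → ℝ)).symm ![1, 0, 0, -1] with hv
    have hnv : ‖v‖ = Real.sqrt 2 := by
      rw [EuclideanSpace.norm_eq, Fin.sum_univ_four]
      norm_num [hv, Matrix.cons_val_two, Matrix.cons_val_three]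
    have hfv : ‖f v‖ = Real.sqrt 2 := by
      rw [EuclideanSpace.norm_eq, Fin.sum_univ_four, happ v 0, happ v 1, happ v 2, happ v 3]
      norm_num [hv, Qex, Wmat, Matrix.mulVec, dotProduct, Fin.sum_univ_four,
        Equiv.apply_symm_apply, Matrix.cons_val_two, Matrix.cons_val_three]
    have := f.le_opNorm v
    rw [hfv, hnv] at this
    have h2 : (0:ℝ) < Real.sqrt 2 := by positivity
    nlinarith
  rw [euclOpNorm, ← hf]
  exact le_antisymm upper lower
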